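/- Let k, t ≥ 1 and let V be a word of length k·t over the alphabet Fin l. If V has at most k distinct factors of length k, then V contains a t-th power: there is a nonempty word u such that u^t is a factor of V. -/

import Mathlib

open List Real

/-- A word over the alphabet `Fin l`. -/
abbrev Word (l : ℕ) : Type := List (Fin l)

/-- `u ≻ v`: at the first position where they differ (a position within the length of both),
the letter of `u` is greater than that of `v`. -/
def WGt {l : ℕ} (u v : Word l) : Prop :=
  ∃ (w u' v' : Word l) (a b : Fin l), b < a ∧ u = w ++ a :: u' ∧ v = w ++ b :: v'

/-- `W` is `n`-divided: `W = W₀W₁⋯Wₙ` with `W₁, …, Wₙ` nonempty and `W₁ ≻ W₂ ≻ ⋯ ≻ Wₙ`. -/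
def NDivided {l : ℕ} (n : ℕ) (W : Word l) : Prop :=
  ∃ (W₀ : Word l) (ws : List (Word l)), ws.length = n ∧ (∀ w ∈ ws, w ≠ []) ∧
    ws.Chain' WGt ∧ W = W₀ ++ ws.flatten

/-- `W` contains a `d`-th power of a nonempty word as a factor. -/
def ContainsPow {l : ℕ} (d : ℕ) (W : Word l) : Prop :=
  ∃ u : Word l, u ≠ [] ∧ (List.replicate d u).flatten <:+: W

namespace FFP

variable {l : ℕ}

/-- the window of length `m` starting at position `r`. -/
def win (W : Word l) (r m : ℕ) : Word l := (W.drop r).take m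

lemma win_getElem? (W : Word l) (r m o : ℕ) :
    (win W r m)[o]? = if o < m then W[r + o]? else none := by
  simp [win, List.getElem?_take, List.getElem?_drop]

lemma win_ext {W : Word l} {r r' m : ℕ} (h : ∀ o, o < m → W[r + o]? = W[r' + o]?) :
    win W r m = win W r' m := by
  apply List.ext_getElem?
  intro o
  rw [win_getElem?, win_getElem?]
  split
  · exact h o (by assumption)
  · rfl

lemma win_letter {W : Word l} {r r' m : ℕ} (h : win W r m = win W r' m)
    {o : ℕ} (ho : o < m) : W[r + o]? = W[r' + o]? := by
  have := congrArg (fun u : Word l => u[o]?) h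
  simpa [win_getElem?, ho] using this

lemma win_length {W : Word l} {r m : ℕ} (h : r + m ≤ W.length) :
    (win W r m).length = m := by
  simp only [win, List.length_take, List.length_drop]
  omega

lemma win_infix (W : Word l) (r m : ℕ) : win W r m <:+: W :=
  ((List.take_prefix _ _).isInfix).trans ((List.drop_suffix r W).isInfix)

lemma infix_win {W u : Word l} (h : u <:+: W) :
    ∃ r, r + u.length ≤ W.length ∧ win W r u.length = u := by
  obtain ⟨s, t, rfl⟩ := h
  refine ⟨s.length, by simp, ?_⟩
  have h1 : (s ++ u ++ t) = s ++ (u ++ t) := by simp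
  rw [win, h1, List.drop_left, List.take_left]

/-- the set of factors of length `m`. -/
def facs (W : Word l) (m : ℕ) : Finset (Word l) :=
  (Finset.range (W.length - m + 1)).image (fun r => win W r m)

lemma win_mem_facs {W : Word l} {r m : ℕ} (h : r + m ≤ W.length) :
    win W r m ∈ facs W m := by
  refine Finset.mem_image.2 ⟨r, Finset.mem_range.2 (by omega), rfl⟩

lemma mem_facs {W v : Word l} {m : ℕ} (hm : m ≤ W.length) :
    v ∈ facs W m ↔ v.length = m ∧ v <:+: W := by
  constructor
  · rintro hv
    obtain ⟨r, hr, rfl⟩ := Finset.mem_image.1 hv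
    have hr' : r + m ≤ W.length := by
      have := Finset.mem_range.1 hr; omega
    exact ⟨win_length hr', win_infix W r m⟩
  · rintro ⟨hvl, hvi⟩
    obtain ⟨r, hr, hw⟩ := infix_win hvi
    rw [hvl] at hr hw
    exact hw ▸ win_mem_facs hr

lemma win_split (W : Word l) (ρ a b : ℕ) :
    win W ρ (a + b) = win W ρ a ++ win W (ρ + a) b := by
  rw [win, win, win, List.take_add, List.drop_drop]

lemma periodic_pow (W : Word l) (c : ℕ) :
    ∀ (q ρ : ℕ),
      (∀ x, ρ ≤ x → x + c < ρ + c * q → W[x]? = W[x + c]?) →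
      (List.replicate q (win W ρ c)).flatten = win W ρ (c * q) := by
  intro q
  induction q with
  | zero => intro ρ _; simp [win]
  | succ q ih =>
    intro ρ hper
    rw [List.replicate_succ, List.flatten_cons]
    have hsplit : win W ρ (c * (q + 1)) = win W ρ c ++ win W (ρ + c) (c * q) := by
      have : c * (q + 1) = c + c * q := by ring
      rw [this, win_split]
    rw [hsplit]
    congr 1
    rcases Nat.eq_zero_or_pos q with hq | hq
    · subst hq; simp [win]
    · have hcopy : win W (ρ + c) c = win W ρ c := by
        apply win_ext
        intro o ho
        have := hper (ρ + o) (by omega) (by nlinarith)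
        rw [show ρ + o + c = ρ + c + o by ring] at this
        exact this.symm
      rw [← hcopy]
      apply ih
      intro x hx hxc
      have harith : c * (q + 1) = c * q + c := by ring
      exact hper x (by omega) (by omega)

lemma containsPow_of_period (W : Word l) (c ρ q : ℕ) (hc : 1 ≤ c) (hq : 1 ≤ q)
    (hlen : ρ + c * q ≤ W.length)
    (hper : ∀ x, ρ ≤ x → x + c < ρ + c * q → W[x]? = W[x + c]?) :
    ContainsPow q W := by
  refine ⟨win W ρ c, ?_, ?_⟩
  · have hl : (win W ρ c).length = c := win_length (by nlinarith)
    intro hnil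
    rw [hnil] at hl
    simp at hl
    omega
  · rw [periodic_pow W c q ρ hper]
    exact win_infix W ρ (c * q)

end FFP
namespace FFP
variable {l : ℕ}

/-- there is a right-special factor of length `m`. -/
def RS (W : Word l) (m : ℕ) : Prop :=
  ∃ (u : Word l) (a b : Fin l), a ≠ b ∧ u.length = m ∧ (u ++ [a]) <:+: W ∧ (u ++ [b]) <:+: W

lemma win_snoc {W : Word l} {r m : ℕ} (h : r + m < W.length) :
    win W r (m + 1) = win W r m ++ [W[r + m]'(h)] := by
  rw [win, win, List.take_succ]
  congr 1
  rw [List.getElem?_drop, List.getElem?_eq_getElem h]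
  rfl

lemma det_of_not_RS {W : Word l} {m : ℕ} (hdet : ¬ RS W m) {r r' : ℕ}
    (hr : r + m < W.length) (hr' : r' + m < W.length)
    (hw : win W r m = win W r' m) : W[r + m]? = W[r' + m]? := by
  rw [List.getElem?_eq_getElem hr, List.getElem?_eq_getElem hr']
  by_contra hne
  have hab : W[r + m]'hr ≠ W[r' + m]'hr' := by
    intro h; exact hne (by rw [h])
  apply hdet
  refine ⟨win W r m, W[r + m]'hr, W[r' + m]'hr', hab, win_length (le_of_lt hr), ?_, ?_⟩
  · rw [← win_snoc hr]; exact win_infix W r (m + 1)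
  · rw [hw, ← win_snoc hr']; exact win_infix W r' (m + 1)

lemma caseA {W : Word l} {k s t m : ℕ} (ht : 2 ≤ t) (hsk : s ≤ k) (hmk : m ≤ k)
    (hlen : k + s * (t - 1) ≤ W.length) (hcard : (facs W k).card ≤ s)
    (hdet : ¬ RS W m) : ContainsPow t W := by
  have hkW : k ≤ W.length := by nlinarith
  -- the m-windows at positions ≤ length - k lie in the image of facs W k under take m
  have hsub : ∀ r ∈ Finset.range (W.length - k + 1),
      win W r m ∈ (facs W k).image (List.take m) := by
    intro r hr
    have hr' : r + k ≤ W.length := by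
      have := Finset.mem_range.1 hr; omega
    refine Finset.mem_image.2 ⟨win W r k, win_mem_facs hr', ?_⟩
    rw [win, win, List.take_take]
    congr 1
    omega
  have hcardA : ((facs W k).image (List.take m)).card ≤ s :=
    le_trans (Finset.card_image_le) hcard
  -- pigeonhole: a repeated m-window with both positions ≤ length - k
  have hrep : ∃ j, ∃ i < j, j ≤ W.length - k ∧ win W i m = win W j m := by
    have hlt : ((facs W k).image (List.take m)).card < (Finset.range (W.length - k + 1)).card := by
      rw [Finset.card_range]
      have : s * 1 ≤ s * (t - 1) := Nat.mul_le_mul_left s (by omega)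
      omega
    obtain ⟨x, hx, y, hy, hxy, hfxy⟩ :=
      Finset.exists_ne_map_eq_of_card_lt_of_maps_to hlt hsub
    rcases Nat.lt_or_ge x y with h | h
    · exact ⟨y, x, h, by have := Finset.mem_range.1 hy; omega, hfxy⟩
    · have h' : y < x := by omega
      exact ⟨x, y, h', by have := Finset.mem_range.1 hx; omega, hfxy.symm⟩
  -- least repeat position
  have hrep' : ∃ j, ∃ i < j, win W i m = win W j m := by
    obtain ⟨j, i, h1, _, h3⟩ := hrep
    exact ⟨j, i, h1, h3⟩
  classical
  let j := Nat.find hrep'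
  obtain ⟨i, hij, heq⟩ : ∃ i < j, win W i m = win W j m := Nat.find_spec hrep'
  have hjle : j ≤ W.length - k := by
    obtain ⟨j0, i0, h1, h2, h3⟩ := hrep
    exact le_trans (Nat.find_min' hrep' ⟨i0, h1, h3⟩) h2
  -- j ≤ s : windows at 0..j-1 are pairwise distinct and live in the image
  have hjs : j ≤ s := by
    have hinj : Set.InjOn (fun r => win W r m) ↑(Finset.range j) := by
      intro a ha b hb hab
      simp only [Finset.coe_range, Set.mem_Iio] at ha hb
      by_contra hne
      rcases Nat.lt_or_ge a b with h | h
      · exact Nat.find_min hrep' hb ⟨a, h, hab⟩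
      · have h' : b < a := by omega
        exact Nat.find_min hrep' ha ⟨b, h', hab.symm⟩
    have hsub2 : (Finset.range j).image (fun r => win W r m) ⊆ (facs W k).image (List.take m) := by
      intro v hv
      obtain ⟨r, hr, rfl⟩ := Finset.mem_image.1 hv
      exact hsub r (Finset.mem_range.2 (by have := Finset.mem_range.1 hr; omega))
    calc j = ((Finset.range j).image (fun r => win W r m)).card := by
              rw [Finset.card_image_of_injOn hinj, Finset.card_range]
      _ ≤ _ := Finset.card_le_card hsub2
      _ ≤ s := hcardA
  set c := j - i with hc
  have hc1 : 1 ≤ c := by omega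
  -- the period propagates to the whole suffix starting at i
  have hper : ∀ x, i ≤ x → x + c < W.length → W[x]? = W[x + c]? := by
    intro x
    induction x using Nat.strong_induction_on with
    | _ x IH =>
      intro hx hxc
      rcases Nat.lt_or_ge x (i + m) with hcase | hcase
      · -- directly from heq
        have := win_letter heq (o := x - i) (by omega)
        rw [show i + (x - i) = x by omega] at this
        rw [show j + (x - i) = x + c by omega] at this
        exact this
      · set r := x - m with hr
        have hwin : win W r m = win W (r + c) m := by
          apply win_ext
          intro o ho
          have := IH (r + o) (by omega) (by omega) (by omega)
          rw [show r + o + c = r + c + o by ring] at this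
          exact this
        have := det_of_not_RS hdet (r := r) (r' := r + c)
          (by omega) (by omega) hwin
        rw [show r + m = x by omega] at this
        rw [show r + c + m = x + c by omega] at this
        exact this
  -- conclude
  apply containsPow_of_period W c i t hc1 (by omega)
  · have h1 : i + c = j := by omega
    have h2 : c * t = c + c * (t - 1) := by
      have : t = 1 + (t - 1) := by omega
      calc c * t = c * (1 + (t - 1)) := by rw [← this]
        _ = c + c * (t - 1) := by ring
    have h3 : c * (t - 1) ≤ s * (t - 1) := Nat.mul_le_mul_right _ (by omega)
    omega
  · intro x hx hxc
    apply hper x hx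
    have h2 : c * t = c + c * (t - 1) := by
      have ht1 : t = 1 + (t - 1) := by omega
      calc c * t = c * (1 + (t - 1)) := by rw [← ht1]
        _ = c + c * (t - 1) := by ring
    have h3 : c * (t - 1) ≤ s * (t - 1) := Nat.mul_le_mul_right _ (by omega)
    omega

end FFP
namespace FFP
variable {l : ℕ}

/-- the suffix of length `m` occurs only at the end. -/
def Dead (W : Word l) (m : ℕ) : Prop :=
  ∀ r, r + m < W.length → win W r m ≠ win W (W.length - m) m

lemma snoc_mem_facs {W u : Word l} {a : Fin l} {m : ℕ} (hu : u.length = m)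
    (h : (u ++ [a]) <:+: W) : u ++ [a] ∈ facs W (m + 1) := by
  have hlen : m + 1 ≤ W.length := by
    have := h.length_le
    simp [hu] at this
    omega
  exact (mem_facs hlen).2 ⟨by simp [hu], h⟩

lemma take_snoc {u : Word l} {a : Fin l} {m : ℕ} (hu : u.length = m) :
    (u ++ [a]).take m = u := by
  rw [← hu, List.take_left]

lemma facs_grow {W : Word l} {m : ℕ} (hm : m + 1 ≤ W.length) (hRS : RS W m) :
    (facs W m).card ≤ (facs W (m + 1)).card ∧
      (¬ Dead W m → (facs W m).card + 1 ≤ (facs W (m + 1)).card) := by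
  classical
  obtain ⟨u, a, b, hab, hu, ha, hb⟩ := hRS
  have haf : u ++ [a] ∈ facs W (m + 1) := snoc_mem_facs hu ha
  have hbf : u ++ [b] ∈ facs W (m + 1) := snoc_mem_facs hu hb
  set G := (facs W (m + 1)).erase (u ++ [a]) with hG
  have hbG : u ++ [b] ∈ G := Finset.mem_erase.2 ⟨by simp [hab.symm], hbf⟩
  have hGcard : G.card = (facs W (m + 1)).card - 1 := Finset.card_erase_of_mem haf
  have hGpos : 1 ≤ (facs W (m + 1)).card := Finset.card_pos.2 ⟨_, haf⟩
  -- every length-m factor with an occurrence not at the very end is covered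
  have cover : ∀ r, r + m < W.length → win W r m ∈ G.image (List.take m) := by
    intro r hrm
    have hz : win W r (m + 1) ∈ facs W (m + 1) := win_mem_facs (by omega)
    have hzt : (win W r (m + 1)).take m = win W r m := by
      rw [win, win, List.take_take]; congr 1; omega
    by_cases hza : win W r (m + 1) = u ++ [a]
    · -- then win W r m = u, which is also covered via u ++ [b]
      have hru : win W r m = u := by rw [← hzt, hza, take_snoc hu]
      refine Finset.mem_image.2 ⟨u ++ [b], hbG, ?_⟩
      rw [take_snoc hu, hru]
    · exact Finset.mem_image.2 ⟨win W r (m + 1), Finset.mem_erase.2 ⟨hza, hz⟩, hzt⟩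
  have hGimcard : (G.image (List.take m)).card ≤ (facs W (m + 1)).card - 1 :=
    le_trans Finset.card_image_le (le_of_eq hGcard)
  constructor
  · -- erase the suffix from facs W m
    have hsfx : win W (W.length - m) m ∈ facs W m := win_mem_facs (by omega)
    have hsub : (facs W m).erase (win W (W.length - m) m) ⊆ G.image (List.take m) := by
      intro v hv
      obtain ⟨hne, hvf⟩ := Finset.mem_erase.1 hv
      obtain ⟨r, hr, rfl⟩ := Finset.mem_image.1 hvf
      have hrr : r ≤ W.length - m := by have := Finset.mem_range.1 hr; omega
      have hrm : r + m < W.length := by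
        rcases Nat.lt_or_ge r (W.length - m) with h | h
        · omega
        · exfalso
          apply hne
          rw [show r = W.length - m by omega]
      exact cover r hrm
    have h1 : (facs W m).card - 1 ≤ (facs W (m + 1)).card - 1 := by
      calc (facs W m).card - 1 = ((facs W m).erase (win W (W.length - m) m)).card :=
            (Finset.card_erase_of_mem hsfx).symm
        _ ≤ (G.image (List.take m)).card := Finset.card_le_card hsub
        _ ≤ _ := hGimcard
    have hpos : 1 ≤ (facs W m).card := Finset.card_pos.2 ⟨_, hsfx⟩
    omega
  · intro hnd
    simp only [Dead, not_forall, _root_.not_imp, not_not] at hnd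
    obtain ⟨r', hr'm, hr'eq⟩ := hnd
    have hsub : facs W m ⊆ G.image (List.take m) := by
      intro v hv
      obtain ⟨r, hr, rfl⟩ := Finset.mem_image.1 hv
      have hrr : r ≤ W.length - m := by have := Finset.mem_range.1 hr; omega
      rcases Nat.lt_or_ge r (W.length - m) with h | h
      · exact cover r (by omega)
      · have hre : win W r m = win W r' m := by
          rw [show r = W.length - m by omega, hr'eq]
        rw [hre]
        exact cover r' hr'm
    have h1 : (facs W m).card ≤ (facs W (m + 1)).card - 1 :=
      le_trans (Finset.card_le_card hsub) hGimcard
    omega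

end FFP
namespace FFP
variable {l : ℕ}

lemma facs_card_pos {W : Word l} {m : ℕ} (hm : m ≤ W.length) : 1 ≤ (facs W m).card :=
  Finset.card_pos.2 ⟨win W 0 m, win_mem_facs (by omega)⟩

lemma chain {W : Word l} {k : ℕ} (hk : k ≤ W.length)
    (hall : ∀ m, m < k → RS W m) (hnd : ∀ m, m < k → ¬ Dead W m) :
    k + 1 ≤ (facs W k).card := by
  have main : ∀ m, m ≤ k → m + 1 ≤ (facs W m).card := by
    intro m
    induction m with
    | zero => intro _; exact facs_card_pos (by omega)
    | succ m ihm =>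
      intro hmk
      have h1 := ihm (by omega)
      have h2 := (facs_grow (by omega) (hall m (by omega))).2 (hnd m (by omega))
      omega
  exact main k le_rfl

lemma dead_up {W : Word l} {m k : ℕ} (hmk : m ≤ k) (hkW : k ≤ W.length)
    (hd : Dead W m) : Dead W k := by
  intro r hrk hcon
  apply hd (r + (k - m)) (by omega)
  apply win_ext
  intro o ho
  have h := win_letter hcon (o := (k - m) + o) (by omega)
  rw [show r + ((k - m) + o) = r + (k - m) + o by ring] at h
  rw [show W.length - k + ((k - m) + o) = W.length - m + o by omega] at h
  exact h

lemma win_dropLast {W : Word l} {r m : ℕ} (h : r + m ≤ W.length - 1) :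
    win W.dropLast r m = win W r m := by
  apply List.ext_getElem?
  intro o
  rw [win_getElem?, win_getElem?]
  by_cases ho : o < m
  · rw [if_pos ho, if_pos ho, List.dropLast_eq_take, List.getElem?_take, if_pos (by omega)]
  · rw [if_neg ho, if_neg ho]

lemma dropLast_facs {W : Word l} {k : ℕ} (hk1 : k + 1 ≤ W.length) (hd : Dead W k) :
    (facs W.dropLast k).card + 1 ≤ (facs W k).card := by
  classical
  have hsub : facs W.dropLast k ⊆ (facs W k).erase (win W (W.length - k) k) := by
    intro v hv
    obtain ⟨r, hr, rfl⟩ := Finset.mem_image.1 hv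
    have hr' : r + k ≤ W.length - 1 := by
      have := Finset.mem_range.1 hr
      rw [List.length_dropLast] at this
      omega
    rw [win_dropLast hr']
    exact Finset.mem_erase.2 ⟨hd r (by omega), win_mem_facs (by omega)⟩
  have h1 : (facs W.dropLast k).card ≤ (facs W k).card - 1 := by
    calc (facs W.dropLast k).card ≤ ((facs W k).erase (win W (W.length - k) k)).card :=
          Finset.card_le_card hsub
      _ = (facs W k).card - 1 := Finset.card_erase_of_mem (win_mem_facs (by omega))
  have h2 : 1 ≤ (facs W k).card := facs_card_pos (by omega)
  omega

lemma containsPow_mono {W W' : Word l} {t : ℕ} (h : ContainsPow t W') (hW : W' <:+: W) :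
    ContainsPow t W := by
  obtain ⟨u, hu, hinf⟩ := h
  exact ⟨u, hu, hinf.trans hW⟩

lemma aux (k t : ℕ) (hk : 1 ≤ k) (ht : 2 ≤ t) :
    ∀ s, s ≤ k → ∀ W : Word l, k + s * (t - 1) ≤ W.length → (facs W k).card ≤ s →
      ContainsPow t W := by
  intro s
  induction s with
  | zero =>
    intro _ W hlen hcard
    have h1 : 1 ≤ (facs W k).card := facs_card_pos (by omega)
    omega
  | succ s ih =>
    intro hsk W hlen hcard
    have hkW : k ≤ W.length := by omega
    by_cases hA : ∃ m, m ≤ k ∧ ¬ RS W m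
    · obtain ⟨m, hmk, hdet⟩ := hA
      exact caseA ht hsk hmk hlen hcard hdet
    · push_neg at hA
      by_cases hD : ∃ m, m < k ∧ Dead W m
      · obtain ⟨m, hm, hd⟩ := hD
        have hdk : Dead W k := dead_up (le_of_lt hm) hkW hd
        have hstep : (s + 1) * (t - 1) = s * (t - 1) + (t - 1) := by ring
        have hk1 : k + 1 ≤ W.length := by omega
        have hrec := ih (by omega) W.dropLast
          (by rw [List.length_dropLast]; omega)
          (by have := dropLast_facs hk1 hdk; omega)
        exact containsPow_mono hrec (List.dropLast_prefix W).isInfix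
      · push_neg at hD
        have := chain hkW (fun m hm => hA m (le_of_lt hm)) hD
        omega

end FFP

theorem few_factors_power (l k t : ℕ) (hk : 1 ≤ k) (ht : 1 ≤ t) (V : Word l)
    (hlen : V.length = k * t)
    (hfac : Set.ncard {u : Word l | u.length = k ∧ u <:+: V} ≤ k) :
    ContainsPow t V := by
  rcases Nat.lt_or_ge t 2 with h1 | h2
  · have ht1 : t = 1 := by omega
    subst ht1
    refine ⟨V, ?_, by simpa using List.infix_rfl⟩
    intro hnil
    rw [hnil] at hlen
    simp at hlen
    omega
  · have hkV : k ≤ V.length := by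
      rw [hlen]
      exact Nat.le_mul_of_pos_right k (by omega)
    have hset : {u : Word l | u.length = k ∧ u <:+: V} = ↑(FFP.facs V k) := by
      ext u
      simp [FFP.mem_facs hkV]
    rw [hset, Set.ncard_coe_finset] at hfac
    have hlen' : k + k * (t - 1) ≤ V.length := by
      obtain ⟨t', rfl⟩ : ∃ t', t = t' + 1 := ⟨t - 1, by omega⟩
      have : k * (t' + 1) = k + k * t' := by ring
      simp only [Nat.add_sub_cancel]
      omega
    exact FFP.aux k t hk h2 k le_rfl V hlen' hfac
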